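/- arXiv:2107.06628 — 3 statements merged into one kernel-verified Lean document; each statement's English description precedes it below -/
import Mathlib

section
/- Let H₁, H₂ be separable complex Hilbert spaces, H = H₁ ⊗ H₂, (X, μ) = (X₁ × X₂, μ₁ ⊗ μ₂) the product of measure spaces with σ-finite positive measures, let F and G be Bessel mappings for H with respect to (X, μ) with Bessel bounds B_F and B_G, and let m ∈ L^∞(X, μ). Then the continuous Bessel multiplier M_{m,F,G}, defined weakly by ⟨M_{m,F,G} f, g⟩ = ∫_X m(x) ⟨f, F(x)⟩ ⟨G(x), g⟩ dμ(x), is a well-defined bounded operator on H with ‖M_{m,F,G}‖ ≤ ‖m‖_∞ √(B_F B_G). -/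
open MeasureTheory ENNReal

noncomputable section

namespace ContFrame

variable {X : Type*} {H : Type*}

/-- The paper's inner product `⟨f, g⟩`: linear in the first argument and
conjugate-linear in the second (Mathlib's `inner` is conjugate-linear in the first). -/
def pinner [NormedAddCommGroup H] [InnerProductSpace ℂ H] (f g : H) : ℂ :=
  @inner ℂ _ _ g f

/-- `∫_X |⟨f, F x⟩|² dμ(x)`, as a lower integral. -/
def frameInt [MeasurableSpace X] [NormedAddCommGroup H] [InnerProductSpace ℂ H]
    (μ : Measure X) (F : X → H) (f : H) : ℝ≥0∞ :=
  ∫⁻ x, (‖pinner f (F x)‖₊ : ℝ≥0∞) ^ 2 ∂μ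

/-- `F` is weakly measurable: `x ↦ ⟨f, F x⟩` is μ-measurable for every `f`. -/
def WeaklyMeasurable [MeasurableSpace X] [NormedAddCommGroup H] [InnerProductSpace ℂ H]
    (μ : Measure X) (F : X → H) : Prop :=
  ∀ f : H, AEMeasurable (fun x => pinner f (F x)) μ

/-- `F` is a Bessel mapping for `H` w.r.t. `(X, μ)` with Bessel bound `B < ∞`. -/
def IsBesselMapping [MeasurableSpace X] [NormedAddCommGroup H] [InnerProductSpace ℂ H]
    (μ : Measure X) (F : X → H) (B : ℝ≥0∞) : Prop :=
  B < ⊤ ∧ WeaklyMeasurable μ F ∧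
    ∀ f : H, frameInt μ F f ≤ B * (‖f‖₊ : ℝ≥0∞) ^ 2

/-- `F` is a continuous frame for `H` w.r.t. `(X, μ)` with frame bounds `0 < A ≤ B < ∞`:
`A ‖f‖² ≤ ∫_X |⟨f, F x⟩|² dμ(x) ≤ B ‖f‖²` for all `f ∈ H`. -/
def IsContinuousFrame [MeasurableSpace X] [NormedAddCommGroup H] [InnerProductSpace ℂ H]
    (μ : Measure X) (F : X → H) (A B : ℝ≥0∞) : Prop :=
  0 < A ∧ A ≤ B ∧ B < ⊤ ∧ WeaklyMeasurable μ F ∧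
    ∀ f : H, A * (‖f‖₊ : ℝ≥0∞) ^ 2 ≤ frameInt μ F f ∧
      frameInt μ F f ≤ B * (‖f‖₊ : ℝ≥0∞) ^ 2

/-- A realization of the Hilbert tensor product `H = H₁ ⊗ H₂`: a bilinear map
`tmul` whose simple tensors satisfy `⟪a⊗b, c⊗d⟫ = ⟪a,c⟫⟪b,d⟫` and span a dense subspace. -/
structure HilbertTensorProduct (H₁ H₂ H : Type*)
    [NormedAddCommGroup H₁] [InnerProductSpace ℂ H₁]
    [NormedAddCommGroup H₂] [InnerProductSpace ℂ H₂]
    [NormedAddCommGroup H] [InnerProductSpace ℂ H] where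
  tmul : H₁ →ₗ[ℂ] H₂ →ₗ[ℂ] H
  inner_tmul : ∀ (a c : H₁) (b d : H₂),
    (inner ℂ (tmul a b) (tmul c d) : ℂ) = (inner ℂ a c : ℂ) * (inner ℂ b d : ℂ)
  dense_span : Dense (↑(Submodule.span ℂ {z : H | ∃ a b, z = tmul a b}) : Set H)

/-- `M` is the continuous Bessel multiplier `M_{m,F,G}`, defined weakly by
`⟨M f, g⟩ = ∫_X m(x) ⟨f, F x⟩ ⟨G x, g⟩ dμ(x)`. -/
def IsMultiplier {X H : Type*} [MeasurableSpace X]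
    [NormedAddCommGroup H] [InnerProductSpace ℂ H]
    (μ : Measure X) (m : X → ℂ) (F G : X → H) (M : H →L[ℂ] H) : Prop :=
  ∀ f g : H, pinner (M f) g = ∫ x, m x * pinner f (F x) * pinner (G x) g ∂μ

lemma frameInt_lt_top' [MeasurableSpace X] [NormedAddCommGroup H] [InnerProductSpace ℂ H]
    {μ : Measure X} {F : X → H} {B : ℝ≥0∞}
    (hF : IsBesselMapping μ F B) (f : H) : frameInt μ F f < ⊤ :=
  lt_of_le_of_lt (hF.2.2 f) (ENNReal.mul_lt_top hF.1 (ENNReal.pow_lt_top ENNReal.coe_lt_top))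

lemma memL2' [MeasurableSpace X] [NormedAddCommGroup H] [InnerProductSpace ℂ H]
    {μ : Measure X} {F : X → H} {B : ℝ≥0∞}
    (hF : IsBesselMapping μ F B) (f : H) : MemLp (fun x => pinner f (F x)) 2 μ := by
  refine ⟨(hF.2.1 f).aestronglyMeasurable, ?_⟩
  rw [eLpNorm_eq_lintegral_rpow_enorm_toReal two_ne_zero ENNReal.ofNat_ne_top]
  have h2 : ∫⁻ x, (‖pinner f (F x)‖₊ : ℝ≥0∞) ^ (2 : ℝ≥0∞).toReal ∂μ = frameInt μ F f := by
    simp [frameInt, ENNReal.toReal_ofNat, ENNReal.rpow_two]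
  erw [h2]
  exact ENNReal.rpow_lt_top_of_nonneg (by positivity) (frameInt_lt_top' hF f).ne

lemma exists_multiplier [MeasurableSpace X] [NormedAddCommGroup H] [InnerProductSpace ℂ H]
    [CompleteSpace H] (μ : Measure X) (F G : X → H) (BF BG : ℝ≥0∞)
    (hF : IsBesselMapping μ F BF) (hG : IsBesselMapping μ G BG)
    (m : X → ℂ) (hm : MemLp m ⊤ μ) :
    ∃ M : H →L[ℂ] H, IsMultiplier μ m F G M ∧
      ‖M‖ ≤ (eLpNorm m ⊤ μ).toReal * Real.sqrt ((BF * BG).toReal) := by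
  classical
  set D : ℝ := (eLpNorm m ⊤ μ).toReal * Real.sqrt ((BF * BG).toReal) with hD
  have hD0 : 0 ≤ D := mul_nonneg ENNReal.toReal_nonneg (Real.sqrt_nonneg _)
  set k : H → H → X → ℂ := fun f g x => m x * pinner f (F x) * pinner (G x) g with hk
  set I : H → H → ℂ := fun f g => ∫ x, k f g x ∂μ with hI
  have hb_eq : ∀ (g : H) (x : X), pinner (G x) g = (starRingEnd ℂ) (pinner g (G x)) := by
    intro g x
    simp only [pinner]
    exact (inner_conj_symm (𝕜 := ℂ) g (G x)).symm
  have hbM : ∀ g : H, MemLp (fun x => pinner (G x) g) 2 μ := by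
    intro g
    have h2 := memL2' hG g
    refine MemLp.of_le h2 ?_ (Filter.Eventually.of_forall fun x => ?_)
    · have : (fun x => pinner (G x) g) = fun x => (starRingEnd ℂ) (pinner g (G x)) :=
        funext fun x => hb_eq g x
      rw [this]
      exact RCLike.continuous_conj.comp_aestronglyMeasurable h2.1
    · rw [hb_eq g x, RCLike.norm_conj]
  have hInt : ∀ f g : H, Integrable (k f g) μ := by
    intro f g
    have ha := memL2' hF f
    have hb := hbM g
    have hab : MemLp ((fun x => pinner f (F x)) • (fun x => pinner (G x) g)) 1 μ :=
      hb.smul ha (hpqr := ⟨by rw [inv_one]; exact ENNReal.inv_two_add_inv_two⟩)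
    have hk1 : MemLp
        (m • ((fun x => pinner f (F x)) • fun x => pinner (G x) g)) 1 μ :=
      hab.smul hm
    have := memLp_one_iff_integrable.mp hk1
    simpa [hk, Pi.smul_apply, smul_eq_mul, mul_assoc, Pi.mul_def] using this
  have hkey : ∀ f g : H, (∫⁻ x, (‖k f g x‖₊ : ℝ≥0∞) ∂μ) ≤
      eLpNorm m ⊤ μ * ((BF * (‖f‖₊ : ℝ≥0∞) ^ 2) ^ (1/2 : ℝ) *
        (BG * (‖g‖₊ : ℝ≥0∞) ^ 2) ^ (1/2 : ℝ)) := by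
    intro f g
    have hmtop : eLpNorm m ⊤ μ ≠ ⊤ := hm.2.ne
    have hstep1 : (∫⁻ x, (‖k f g x‖₊ : ℝ≥0∞) ∂μ) ≤
        ∫⁻ x, eLpNorm m ⊤ μ *
          ((‖pinner f (F x)‖₊ : ℝ≥0∞) * (‖pinner (G x) g‖₊ : ℝ≥0∞)) ∂μ := by
      refine lintegral_mono_ae ?_
      filter_upwards [ae_le_eLpNormEssSup (f := m) (μ := μ)] with x hx
      have he : (‖k f g x‖₊ : ℝ≥0∞) =
          (‖m x‖₊ : ℝ≥0∞) * ((‖pinner f (F x)‖₊ : ℝ≥0∞) * (‖pinner (G x) g‖₊ : ℝ≥0∞)) := by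
        simp [hk, nnnorm_mul, ENNReal.coe_mul, mul_assoc]
      rw [he]
      exact mul_le_mul_left (by rw [eLpNorm_exponent_top]; exact hx) _
    have hconj : Real.HolderConjugate 2 2 := Real.HolderConjugate.two_two
    have ha_meas : AEMeasurable (fun x => ((‖pinner f (F x)‖₊ : ℝ≥0∞))) μ :=
      (hF.2.1 f).enorm
    have hb_meas : AEMeasurable (fun x => ((‖pinner (G x) g‖₊ : ℝ≥0∞))) μ :=
      (hbM g).1.enorm
    have hH := ENNReal.lintegral_mul_le_Lp_mul_Lq μ hconj ha_meas hb_meas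
    have e1 : (∫⁻ x, (‖pinner f (F x)‖₊ : ℝ≥0∞) ^ (2 : ℝ) ∂μ) = frameInt μ F f := by
      simp [frameInt, ENNReal.rpow_two]
    have e2 : (∫⁻ x, (‖pinner (G x) g‖₊ : ℝ≥0∞) ^ (2 : ℝ) ∂μ) = frameInt μ G g := by
      simp only [frameInt, ENNReal.rpow_two]
      refine lintegral_congr fun x => ?_
      rw [hb_eq g x, RCLike.nnnorm_conj]
    rw [e1, e2] at hH
    have hstep2 : (∫⁻ x, (‖pinner f (F x)‖₊ : ℝ≥0∞) * (‖pinner (G x) g‖₊ : ℝ≥0∞) ∂μ) ≤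
        (BF * (‖f‖₊ : ℝ≥0∞) ^ 2) ^ (1/2 : ℝ) * (BG * (‖g‖₊ : ℝ≥0∞) ^ 2) ^ (1/2 : ℝ) :=
      hH.trans (mul_le_mul'
        (ENNReal.rpow_le_rpow (hF.2.2 f) (by norm_num))
        (ENNReal.rpow_le_rpow (hG.2.2 g) (by norm_num)))
    calc (∫⁻ x, (‖k f g x‖₊ : ℝ≥0∞) ∂μ)
        ≤ ∫⁻ x, eLpNorm m ⊤ μ *
            ((‖pinner f (F x)‖₊ : ℝ≥0∞) * (‖pinner (G x) g‖₊ : ℝ≥0∞)) ∂μ := hstep1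
      _ = eLpNorm m ⊤ μ *
            ∫⁻ x, (‖pinner f (F x)‖₊ : ℝ≥0∞) * (‖pinner (G x) g‖₊ : ℝ≥0∞) ∂μ :=
          lintegral_const_mul' _ _ hmtop
      _ ≤ _ := mul_le_mul_right hstep2 _
  have hnorm : ∀ f g : H, ‖I f g‖ ≤ D * ‖f‖ * ‖g‖ := by
    intro f g
    have h1 : ‖I f g‖ ≤ (∫⁻ x, (‖k f g x‖₊ : ℝ≥0∞) ∂μ).toReal := by
      have hni := norm_integral_le_lintegral_norm (μ := μ) (f := k f g)
      simp only [ofReal_norm] at hni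
      exact hni
    have hBFfin : (BF * (‖f‖₊ : ℝ≥0∞) ^ 2) ^ (1/2 : ℝ) ≠ ⊤ :=
      (ENNReal.rpow_lt_top_of_nonneg (by norm_num)
        (ENNReal.mul_lt_top hF.1 (ENNReal.pow_lt_top ENNReal.coe_lt_top)).ne).ne
    have hBGfin : (BG * (‖g‖₊ : ℝ≥0∞) ^ 2) ^ (1/2 : ℝ) ≠ ⊤ :=
      (ENNReal.rpow_lt_top_of_nonneg (by norm_num)
        (ENNReal.mul_lt_top hG.1 (ENNReal.pow_lt_top ENNReal.coe_lt_top)).ne).ne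
    have hRfin : eLpNorm m ⊤ μ * ((BF * (‖f‖₊ : ℝ≥0∞) ^ 2) ^ (1/2 : ℝ) *
        (BG * (‖g‖₊ : ℝ≥0∞) ^ 2) ^ (1/2 : ℝ)) ≠ ⊤ :=
      ENNReal.mul_ne_top hm.2.ne (ENNReal.mul_ne_top hBFfin hBGfin)
    have h2 := ENNReal.toReal_mono hRfin (hkey f g)
    refine (h1.trans h2).trans_eq ?_
    rw [ENNReal.toReal_mul, ENNReal.toReal_mul, ← ENNReal.toReal_rpow, ← ENNReal.toReal_rpow,
      ENNReal.toReal_mul, ENNReal.toReal_mul, ENNReal.toReal_pow, ENNReal.toReal_pow,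
      coe_toReal, coe_toReal, coe_nnnorm, coe_nnnorm,
      ← Real.sqrt_eq_rpow, ← Real.sqrt_eq_rpow,
      Real.sqrt_mul ENNReal.toReal_nonneg, Real.sqrt_mul ENNReal.toReal_nonneg,
      Real.sqrt_sq (norm_nonneg f), Real.sqrt_sq (norm_nonneg g), hD,
      ENNReal.toReal_mul, Real.sqrt_mul ENNReal.toReal_nonneg]
    ring
  -- sesquilinearity
  have Iadd_left : ∀ f f' g : H, I (f + f') g = I f g + I f' g := by
    intro f f' g
    rw [hI]
    show (∫ x, k (f + f') g x ∂μ) = (∫ x, k f g x ∂μ) + ∫ x, k f' g x ∂μ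
    rw [← integral_add (hInt f g) (hInt f' g)]
    refine integral_congr_ae (Filter.Eventually.of_forall fun x => ?_)
    simp only [hk, pinner, inner_add_right]
    ring
  have Ismul_left : ∀ (c : ℂ) (f g : H), I (c • f) g = c * I f g := by
    intro c f g
    have he : (fun x => k (c • f) g x) = fun x => c • k f g x := by
      funext x
      simp only [hk, pinner, inner_smul_right, smul_eq_mul]
      ring
    show (∫ x, k (c • f) g x ∂μ) = c * ∫ x, k f g x ∂μ
    rw [he, integral_smul, smul_eq_mul]
  have Iadd_right : ∀ f g g' : H, I f (g + g') = I f g + I f g' := by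
    intro f g g'
    show (∫ x, k f (g + g') x ∂μ) = (∫ x, k f g x ∂μ) + ∫ x, k f g' x ∂μ
    rw [← integral_add (hInt f g) (hInt f g')]
    refine integral_congr_ae (Filter.Eventually.of_forall fun x => ?_)
    simp only [hk, pinner, inner_add_left]
    ring
  have Ismul_right : ∀ (c : ℂ) (f g : H), I f (c • g) = (starRingEnd ℂ) c * I f g := by
    intro c f g
    have he : (fun x => k f (c • g) x) = fun x => (starRingEnd ℂ) c • k f g x := by
      funext x
      simp only [hk, pinner, inner_smul_left, smul_eq_mul]
      ring
    show (∫ x, k f (c • g) x ∂μ) = (starRingEnd ℂ) c * ∫ x, k f g x ∂μ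
    rw [he, integral_smul, smul_eq_mul]
  -- construction
  let L : H → H →ₗ[ℂ] ℂ := fun f =>
    { toFun := fun g => (starRingEnd ℂ) (I f g)
      map_add' := fun g g' => by
        show (starRingEnd ℂ) (I f (g + g')) = _
        rw [Iadd_right]; exact map_add _ _ _
      map_smul' := fun c g => by
        show (starRingEnd ℂ) (I f (c • g)) = RingHom.id ℂ c • (starRingEnd ℂ) (I f g)
        rw [Ismul_right, map_mul, Complex.conj_conj]
        simp [smul_eq_mul] }
  have hLa : ∀ f g, L f g = (starRingEnd ℂ) (I f g) := fun f g => rfl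
  have hLb : ∀ f : H, ∀ g : H, ‖L f g‖ ≤ D * ‖f‖ * ‖g‖ := by
    intro f g
    rw [hLa, RCLike.norm_conj]
    exact hnorm f g
  let φ : H → H →L[ℂ] ℂ := fun f =>
    LinearMap.mkContinuous (L f) (D * ‖f‖) (fun g => by rw [mul_assoc]; exact (mul_assoc D ‖f‖ ‖g‖) ▸ hLb f g)
  have hφa : ∀ f g, φ f g = (starRingEnd ℂ) (I f g) := fun f g => rfl
  let T : H → H := fun f => (InnerProductSpace.toDual ℂ H).symm (φ f)
  have hT : ∀ f g : H, (inner ℂ (T f) g : ℂ) = (starRingEnd ℂ) (I f g) := by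
    intro f g
    rw [← hφa]
    exact InnerProductSpace.toDual_symm_apply
  have hTnorm : ∀ f : H, ‖T f‖ ≤ D * ‖f‖ := by
    intro f
    have : ‖T f‖ = ‖φ f‖ := LinearIsometryEquiv.norm_map _ _
    rw [this]
    exact LinearMap.mkContinuous_norm_le _ (mul_nonneg hD0 (norm_nonneg f)) _
  have hTadd : ∀ f f' : H, T (f + f') = T f + T f' := by
    intro f f'
    refine ext_inner_right ℂ fun g => ?_
    rw [inner_add_left, hT, hT, hT, Iadd_left, map_add]
  have hTsmul : ∀ (c : ℂ) (f : H), T (c • f) = c • T f := by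
    intro c f
    refine ext_inner_right ℂ fun g => ?_
    rw [inner_smul_left, hT, hT, Ismul_left, map_mul]
  let M : H →L[ℂ] H := LinearMap.mkContinuous
    { toFun := T, map_add' := hTadd, map_smul' := hTsmul } D (fun f => hTnorm f)
  have hM : ∀ f, M f = T f := fun f => rfl
  refine ⟨M, ?_, ?_⟩
  · intro f g
    have h1 : pinner (M f) g = (starRingEnd ℂ) ((inner ℂ (M f) g : ℂ)) := by
      simp only [pinner]
      exact (inner_conj_symm g (M f)).symm
    rw [h1, hM, hT, Complex.conj_conj]
  · exact LinearMap.mkContinuous_norm_le _ hD0 _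

/-- If `F, G` are Bessel mappings for `H = H₁ ⊗ H₂` w.r.t. the product
measure, with Bessel bounds `B_F, B_G`, and `m ∈ L^∞(X,μ)`, then the continuous Bessel
multiplier `M_{m,F,G}` is a well-defined bounded operator with
`‖M_{m,F,G}‖ ≤ ‖m‖_∞ √(B_F B_G)`. -/
theorem multiplier_bounded
    {X₁ X₂ : Type*} [MeasurableSpace X₁] [MeasurableSpace X₂]
    {H₁ H₂ H : Type*}
    [NormedAddCommGroup H₁] [InnerProductSpace ℂ H₁] [CompleteSpace H₁]
      [TopologicalSpace.SeparableSpace H₁]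
    [NormedAddCommGroup H₂] [InnerProductSpace ℂ H₂] [CompleteSpace H₂]
      [TopologicalSpace.SeparableSpace H₂]
    [NormedAddCommGroup H] [InnerProductSpace ℂ H] [CompleteSpace H]
      [TopologicalSpace.SeparableSpace H]
    (μ₁ : Measure X₁) (μ₂ : Measure X₂) [SigmaFinite μ₁] [SigmaFinite μ₂]
    (tp : HilbertTensorProduct H₁ H₂ H)
    (F G : X₁ × X₂ → H) (BF BG : ℝ≥0∞)
    (hF : IsBesselMapping (μ₁.prod μ₂) F BF)
    (hG : IsBesselMapping (μ₁.prod μ₂) G BG)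
    (m : X₁ × X₂ → ℂ) (hm : MemLp m ⊤ (μ₁.prod μ₂)) :
    ∃ M : H →L[ℂ] H, IsMultiplier (μ₁.prod μ₂) m F G M ∧
      ‖M‖ ≤ (eLpNorm m ⊤ (μ₁.prod μ₂)).toReal * Real.sqrt ((BF * BG).toReal) :=
  exists_multiplier (μ₁.prod μ₂) F G BF BG hF hG m hm

end ContFrame
end
end

section
/- Let H₁, H₂ be separable complex Hilbert spaces, H = H₁ ⊗ H₂, (X, μ) = (X₁ × X₂, μ₁ ⊗ μ₂) the product of measure spaces with σ-finite positive measures, and let F and G be Bessel mappings for H with respect to (X, μ), at least one of which is norm bounded (there exists C > 0 with ‖F(x)‖ ≤ C for μ-a.e. x, or the same for G). If m : X → ℂ is an essentially bounded measurable function whose support has finite measure (there exists K ⊆ X with μ(K) < ∞ such that m(x) = 0 for μ-a.e. x ∈ X \ K), then the continuous Bessel multiplier M_{m,F,G} is a compact operator on H. -/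
open MeasureTheory ENNReal

noncomputable section

namespace ContFrame

variable {X : Type*} {H : Type*}

section Aux

open Filter Topology

variable [MeasurableSpace X] [NormedAddCommGroup H] [InnerProductSpace ℂ H]
variable {μ : Measure X}

local notation "⟪" x ", " y "⟫" => @inner ℂ _ _ x y

lemma aemeasurable_pinner_left {G : X → H} (hG : WeaklyMeasurable μ G) (g : H) :
    AEMeasurable (fun x => pinner (G x) g) μ := by
  have h : (fun x => pinner (G x) g) = fun x => star (pinner g (G x)) := by
    funext x
    simp only [pinner, ← starRingEnd_apply, inner_conj_symm]
  rw [h]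
  exact continuous_star.measurable.comp_aemeasurable (hG g)

lemma lintegral_cs {a b : X → ℂ} (ha : AEMeasurable a μ) (hb : AEMeasurable b μ) :
    ∫⁻ x, (‖a x‖₊ : ℝ≥0∞) * (‖b x‖₊ : ℝ≥0∞) ∂μ ≤
      (∫⁻ x, (‖a x‖₊ : ℝ≥0∞) ^ 2 ∂μ) ^ (1/2 : ℝ) *
        (∫⁻ x, (‖b x‖₊ : ℝ≥0∞) ^ 2 ∂μ) ^ (1/2 : ℝ) := by
  have hpq : Real.HolderConjugate 2 2 := Real.HolderConjugate.two_two
  have h := ENNReal.lintegral_mul_le_Lp_mul_Lq μ hpq (f := fun x => (‖a x‖₊ : ℝ≥0∞))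
    (g := fun x => (‖b x‖₊ : ℝ≥0∞))
    (ha.aestronglyMeasurable.enorm) (hb.aestronglyMeasurable.enorm)
  have h2 : ∀ c : ℂ, ((‖c‖₊ : ℝ≥0∞)) ^ (2:ℝ) = (‖c‖₊ : ℝ≥0∞) ^ (2:ℕ) := by
    intro c
    rw [← ENNReal.rpow_natCast]
    norm_num
  simpa only [h2, Pi.mul_apply] using h

lemma integrable_core {a b : X → ℂ} (ha : AEMeasurable a μ) (hb : AEMeasurable b μ)
    (h1 : ∫⁻ x, (‖a x‖₊ : ℝ≥0∞) ^ 2 ∂μ ≠ ⊤) (h2 : ∫⁻ x, (‖b x‖₊ : ℝ≥0∞) ^ 2 ∂μ ≠ ⊤) :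
    Integrable (fun x => a x * b x) μ := by
  refine ⟨(ha.mul hb).aestronglyMeasurable, ?_⟩
  have hle := lintegral_cs (μ := μ) ha hb
  have : ∫⁻ x, (‖a x * b x‖₊ : ℝ≥0∞) ∂μ ≤
      (∫⁻ x, (‖a x‖₊ : ℝ≥0∞) ^ 2 ∂μ) ^ (1/2 : ℝ) *
        (∫⁻ x, (‖b x‖₊ : ℝ≥0∞) ^ 2 ∂μ) ^ (1/2 : ℝ) := by
    refine le_trans (le_of_eq ?_) hle
    congr 1
    funext x
    simp [nnnorm_mul]
  refine lt_of_le_of_lt this ?_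
  exact ENNReal.mul_lt_top
    (ENNReal.rpow_lt_top_of_nonneg (by norm_num) h1)
    (ENNReal.rpow_lt_top_of_nonneg (by norm_num) h2)

lemma ofReal_norm_eq_coe_nnnorm {E : Type*} [SeminormedAddCommGroup E] (a : E) :
    ENNReal.ofReal ‖a‖ = (‖a‖₊ : ℝ≥0∞) :=
  ENNReal.ofReal_eq_coe_nnreal _

lemma opNorm_le_of_rep [CompleteSpace H] (T : H →L[ℂ] H) (u v : H → X → ℂ)
    (hrep : ∀ f g : H, pinner (T f) g = ∫ x, u f x * v g x ∂μ)
    (hu_meas : ∀ f, AEMeasurable (u f) μ) (hv_meas : ∀ g, AEMeasurable (v g) μ)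
    {α β : ℝ≥0∞} (hα : α ≠ ⊤) (hβ : β ≠ ⊤)
    (hu : ∀ f, ∫⁻ x, (‖u f x‖₊ : ℝ≥0∞) ^ 2 ∂μ ≤ α * (‖f‖₊ : ℝ≥0∞) ^ 2)
    (hv : ∀ g, ∫⁻ x, (‖v g x‖₊ : ℝ≥0∞) ^ 2 ∂μ ≤ β * (‖g‖₊ : ℝ≥0∞) ^ 2) :
    ‖T‖ ≤ Real.sqrt α.toReal * Real.sqrt β.toReal := by
  have csq : ∀ (γ : ℝ≥0∞) (f : H), (γ * (‖f‖₊ : ℝ≥0∞) ^ 2) ^ (1/2 : ℝ)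
      = γ ^ (1/2 : ℝ) * (‖f‖₊ : ℝ≥0∞) := by
    intro γ f
    rw [ENNReal.mul_rpow_of_nonneg _ _ (by norm_num), ← ENNReal.rpow_natCast _ 2,
      ← ENNReal.rpow_mul]
    norm_num
  have key : ∀ f g : H, ‖pinner (T f) g‖ ≤
      Real.sqrt α.toReal * Real.sqrt β.toReal * (‖f‖ * ‖g‖) := by
    intro f g
    rw [hrep f g]
    set R : ℝ≥0∞ := (α ^ (1/2 : ℝ) * (‖f‖₊ : ℝ≥0∞)) * (β ^ (1/2 : ℝ) * (‖g‖₊ : ℝ≥0∞)) with hR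
    have hRne : R ≠ ⊤ := by
      apply ENNReal.mul_ne_top <;>
        exact ENNReal.mul_ne_top (ENNReal.rpow_ne_top_of_nonneg (by norm_num) ‹_›)
          ENNReal.coe_ne_top
    have hIle : ∫⁻ x, (‖u f x * v g x‖₊ : ℝ≥0∞) ∂μ ≤ R := by
      have e1 : ∫⁻ x, (‖u f x * v g x‖₊ : ℝ≥0∞) ∂μ
          = ∫⁻ x, (‖u f x‖₊ : ℝ≥0∞) * (‖v g x‖₊ : ℝ≥0∞) ∂μ := by
        congr 1; funext x; simp [nnnorm_mul]
      rw [e1]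
      refine le_trans (lintegral_cs (hu_meas f) (hv_meas g)) ?_
      rw [hR, ← csq α f, ← csq β g]
      exact mul_le_mul' (ENNReal.rpow_le_rpow (hu f) (by norm_num))
        (ENNReal.rpow_le_rpow (hv g) (by norm_num))
    have h1 : ‖∫ x, u f x * v g x ∂μ‖ ≤ R.toReal := by
      refine le_trans (norm_integral_le_lintegral_norm _) ?_
      refine ENNReal.toReal_mono hRne ?_
      simpa only [ofReal_norm_eq_coe_nnnorm] using hIle
    refine h1.trans (le_of_eq ?_)
    rw [hR]
    rw [ENNReal.toReal_mul, ENNReal.toReal_mul, ENNReal.toReal_mul]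
    rw [← ENNReal.toReal_rpow, ← ENNReal.toReal_rpow, ENNReal.coe_toReal, ENNReal.coe_toReal,
      Real.sqrt_eq_rpow, Real.sqrt_eq_rpow, coe_nnnorm, coe_nnnorm]
    ring
  refine T.opNorm_le_bound (mul_nonneg (Real.sqrt_nonneg _) (Real.sqrt_nonneg _)) ?_
  intro f
  rcases eq_or_ne (T f) 0 with h0 | h0
  · rw [h0, norm_zero]
    positivity
  · have hk := key f (T f)
    have hps : ‖pinner (T f) (T f)‖ = ‖T f‖ ^ 2 := by
      simp only [pinner]
      rw [inner_self_eq_norm_sq_to_K]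
      simp [Complex.norm_real]
    rw [hps] at hk
    have hpos : 0 < ‖T f‖ := norm_pos_iff.mpr h0
    have : ‖T f‖ * ‖T f‖ ≤ (Real.sqrt α.toReal * Real.sqrt β.toReal * ‖f‖) * ‖T f‖ := by
      rw [← pow_two]
      calc ‖T f‖ ^ 2 ≤ _ := hk
      _ = _ := by ring
    exact le_of_mul_le_mul_right this hpos

lemma isCompactOperator_of_mem_fd [CompleteSpace H] (T : H →L[ℂ] H) (V : Submodule ℂ H)
    [FiniteDimensional ℂ V] (h : ∀ f, T f ∈ V) : IsCompactOperator ⇑T := by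
  refine ⟨V.subtypeL '' Metric.closedBall 0 ‖T‖, ?_, ?_⟩
  · exact (isCompact_closedBall (0 : V) ‖T‖).image V.subtypeL.continuous
  · refine Filter.mem_of_superset (Metric.closedBall_mem_nhds (0:H) one_pos) ?_
    intro x hx
    refine ⟨⟨T x, h x⟩, ?_, rfl⟩
    rw [Metric.mem_closedBall, dist_zero_right]
    show ‖T x‖ ≤ ‖T‖
    exact T.unit_le_opNorm x (mem_closedBall_zero_iff.mp hx)

lemma aemeasurable_norm_proj (V : Submodule ℂ H) [FiniteDimensional ℂ V]
    {A : X → H} (hA : WeaklyMeasurable μ A) :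
    AEMeasurable (fun x => ‖(Submodule.orthogonalProjection V (A x) : H)‖) μ := by
  set b := stdOrthonormalBasis ℂ V with hb
  have hform : ∀ y : H, ‖(Submodule.orthogonalProjection V y : H)‖
      = Real.sqrt (∑ i, ‖pinner ((b i : H)) y‖ ^ 2) := by
    intro y
    have h1 : ‖(Submodule.orthogonalProjection V y : H)‖ = ‖b.repr (Submodule.orthogonalProjection V y)‖ := by
      rw [b.repr.norm_map, Submodule.coe_norm]
    rw [h1, EuclideanSpace.norm_eq]
    congr 1
    refine Finset.sum_congr rfl fun i _ => ?_
    have h2 : b.repr (Submodule.orthogonalProjection V y) i = ⟪(b i : H), y⟫ := by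
      rw [b.repr_apply_apply, Submodule.inner_orthogonalProjectionOnto_eq_of_mem_left]
    rw [h2]
    rw [show pinner ((b i : H)) y = ⟪y, (b i : H)⟫ from rfl, norm_inner_symm]
  simp_rw [hform]
  apply Real.continuous_sqrt.measurable.comp_aemeasurable
  exact Finset.aemeasurable_fun_sum _ fun i _ => ((hA _).norm.pow_const 2)

lemma aemeasurable_norm_of_tendsto {A : X → H} (hA : WeaklyMeasurable μ A)
    (V : ℕ → Submodule ℂ H) [∀ n, FiniteDimensional ℂ (V n)]
    (htend : ∀ y : H, Tendsto (fun n => (Submodule.orthogonalProjection (V n) y : H)) atTop (𝓝 y)) :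
    AEMeasurable (fun x => ‖A x‖) μ := by
  apply aemeasurable_of_tendsto_metrizable_ae atTop
    (fun n => aemeasurable_norm_proj (V n) hA)
  exact Filter.Eventually.of_forall fun x => (continuous_norm.tendsto _).comp (htend (A x))

lemma norm_sub_proj_eq (V : Submodule ℂ H) [FiniteDimensional ℂ V] (y : H) :
    ‖y - (Submodule.orthogonalProjection V y : H)‖
      = Real.sqrt (‖y‖ ^ 2 - ‖(Submodule.orthogonalProjection V y : H)‖ ^ 2) := by
  have h1 := Submodule.norm_sq_eq_add_norm_sq_projection y V
  have h2 : (Submodule.orthogonalProjection Vᗮ y : H) = y - Submodule.orthogonalProjection V y :=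
    Submodule.starProjection_orthogonal_val y
  have h3 : ‖y - (Submodule.orthogonalProjection V y : H)‖ ^ 2
      = ‖y‖ ^ 2 - ‖(Submodule.orthogonalProjection V y : H)‖ ^ 2 := by
    rw [← h2]
    simp only [← Submodule.coe_norm]
    linarith
  rw [← h3, Real.sqrt_sq (norm_nonneg _)]

lemma norm_sub_proj_le (V : Submodule ℂ H) [FiniteDimensional ℂ V] (y : H) :
    ‖y - (Submodule.orthogonalProjection V y : H)‖ ≤ ‖y‖ := by
  rw [norm_sub_proj_eq]
  calc Real.sqrt (‖y‖ ^ 2 - ‖(Submodule.orthogonalProjection V y : H)‖ ^ 2)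
      ≤ Real.sqrt (‖y‖ ^ 2) := Real.sqrt_le_sqrt (sub_le_self _ (by positivity))
  _ = ‖y‖ := Real.sqrt_sq (norm_nonneg _)

lemma aemeasurable_norm_sub_proj {A : X → H} (hA : WeaklyMeasurable μ A)
    (V : ℕ → Submodule ℂ H) [∀ n, FiniteDimensional ℂ (V n)]
    (htend : ∀ y : H, Tendsto (fun n => (Submodule.orthogonalProjection (V n) y : H)) atTop (𝓝 y))
    (n : ℕ) :
    AEMeasurable (fun x => ‖A x - (Submodule.orthogonalProjection (V n) (A x) : H)‖) μ := by
  simp_rw [norm_sub_proj_eq]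
  apply Real.continuous_sqrt.measurable.comp_aemeasurable
  exact ((aemeasurable_norm_of_tendsto hA V htend).pow_const 2).sub
    ((aemeasurable_norm_proj (V n) hA).pow_const 2)

lemma nnnorm_pinner_symm (a b : H) : ‖pinner a b‖₊ = ‖pinner b a‖₊ := by
  apply NNReal.coe_injective
  simpa [coe_nnnorm, pinner] using norm_inner_symm (𝕜 := ℂ) b a

end Aux

section Main

open Filter Topology

local notation "⟪" x ", " y "⟫" => @inner ℂ _ _ x y

theorem multiplier_compact_main {X H : Type*} [MeasurableSpace X]
    [NormedAddCommGroup H] [InnerProductSpace ℂ H] [CompleteSpace H]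
    [TopologicalSpace.SeparableSpace H]
    (μ : Measure X) (F G : X → H) (BF BG : ℝ≥0∞)
    (hF : IsBesselMapping μ F BF) (hG : IsBesselMapping μ G BG)
    (hbdd : (∃ C > (0:ℝ), ∀ᵐ x ∂μ, ‖F x‖ ≤ C) ∨ (∃ C > (0:ℝ), ∀ᵐ x ∂μ, ‖G x‖ ≤ C))
    (m : X → ℂ) (hm : MemLp m ⊤ μ)
    (hsupp : ∃ K : Set X, MeasurableSet K ∧ μ K < ⊤ ∧ ∀ᵐ x ∂μ, x ∉ K → m x = 0)
    (M : H →L[ℂ] H) (hM : IsMultiplier μ m F G M) :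
    IsCompactOperator ⇑M := by
  classical
  obtain ⟨K, hKmeas, hKfin, hmK⟩ := hsupp
  obtain ⟨BFlt, hFw, hFb⟩ := hF
  obtain ⟨BGlt, hGw, hGb⟩ := hG
  -- essential bound for the symbol
  set mB : ℝ≥0∞ := eLpNormEssSup m μ with hmBdef
  have hmB : mB ≠ ⊤ := by
    have h := hm.2; rw [eLpNorm_exponent_top] at h; exact h.ne
  have hmae : ∀ᵐ x ∂μ, (‖m x‖₊ : ℝ≥0∞) ≤ mB := enorm_ae_le_eLpNormEssSup m μ
  have hm_meas : AEMeasurable m μ := hm.1.aemeasurable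
  -- an increasing family of finite-dimensional subspaces with dense union
  obtain ⟨D, hD⟩ := TopologicalSpace.exists_dense_seq H
  set V : ℕ → Submodule ℂ H := fun n => Submodule.span ℂ (D '' {j | j < n}) with hVdef
  haveI hVfd : ∀ n, FiniteDimensional ℂ (V n) := fun n =>
    FiniteDimensional.span_of_finite ℂ ((Set.finite_Iio n).image D)
  have hmono : Monotone V := fun a b hab =>
    Submodule.span_mono (Set.image_mono fun j hj => lt_of_lt_of_le hj hab)
  have hdense : ⊤ ≤ (⨆ n, V n).topologicalClosure := by
    have h1 : Set.range D ⊆ ((⨆ n, V n : Submodule ℂ H) : Set H) := by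
      rintro _ ⟨j, rfl⟩
      exact (le_iSup V (j+1) : V (j+1) ≤ _)
        (Submodule.subset_span ⟨j, by simp, rfl⟩)
    intro x _
    have h2 : closure (Set.range D) ⊆ closure ((⨆ n, V n : Submodule ℂ H) : Set H) :=
      closure_mono h1
    rw [hD.closure_eq] at h2
    rw [← SetLike.mem_coe, Submodule.topologicalClosure_coe]
    exact h2 (Set.mem_univ x)
  have htend : ∀ y : H, Tendsto (fun n => (Submodule.orthogonalProjection (V n) y : H)) atTop (𝓝 y) :=
    fun y => Submodule.starProjection_tendsto_self V hmono y hdense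
  set P : ℕ → H →L[ℂ] H := fun n => (V n).subtypeL.comp (Submodule.orthogonalProjection (V n)) with hPdef
  have hPapp : ∀ (n : ℕ) (y : H), P n y = (Submodule.orthogonalProjection (V n) y : H) := fun n y => rfl
  have hPsa : ∀ (n : ℕ) (a c : H), ⟪P n a, c⟫ = ⟪a, P n c⟫ := fun n a c =>
    Submodule.inner_starProjection_left_eq_right (V n) a c
  -- the error integrals tend to zero
  have hepskey : ∀ (A : X → H), WeaklyMeasurable μ A → ∀ C : ℝ, (∀ᵐ x ∂μ, ‖A x‖ ≤ C) →
      Tendsto (fun n => ∫⁻ x, (‖m x‖₊ : ℝ≥0∞)^2 * (‖A x - P n (A x)‖₊ : ℝ≥0∞)^2 ∂μ)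
        atTop (𝓝 0)
      ∧ ∀ n, ∫⁻ x, (‖m x‖₊ : ℝ≥0∞)^2 * (‖A x - P n (A x)‖₊ : ℝ≥0∞)^2 ∂μ ≠ ⊤ := by
    intro A hAw C hAbdd
    set bound : X → ℝ≥0∞ :=
      fun x => K.indicator (fun _ => mB^2 * (ENNReal.ofReal C)^2) x with hbound
    have hboundfin : ∫⁻ x, bound x ∂μ ≠ ⊤ := by
      rw [hbound, lintegral_indicator hKmeas, setLIntegral_const]
      exact ENNReal.mul_ne_top
        (ENNReal.mul_ne_top (ENNReal.pow_ne_top hmB) (ENNReal.pow_ne_top ENNReal.ofReal_ne_top))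
        hKfin.ne
    have hmeas : ∀ n, AEMeasurable
        (fun x => (‖m x‖₊:ℝ≥0∞)^2 * (‖A x - P n (A x)‖₊:ℝ≥0∞)^2) μ := by
      intro n
      have h2 := ENNReal.measurable_ofReal.comp_aemeasurable
        (aemeasurable_norm_sub_proj hAw V htend n)
      have h2' : AEMeasurable (fun x => (‖A x - P n (A x)‖₊ : ℝ≥0∞)) μ := by
        simpa only [Function.comp_def, ofReal_norm_eq_coe_nnnorm, ← hPapp] using h2
      exact (hm.1.enorm.pow_const 2).mul (h2'.pow_const 2)
    have h_bound : ∀ n, (fun x => (‖m x‖₊:ℝ≥0∞)^2 * (‖A x - P n (A x)‖₊:ℝ≥0∞)^2) ≤ᵐ[μ] bound := by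
      intro n
      filter_upwards [hmae, hAbdd, hmK] with x h1 h2 h3
      by_cases hxK : x ∈ K
      · simp only [hbound, Set.indicator_of_mem hxK]
        refine mul_le_mul' (by exact pow_le_pow_left' h1 2) ?_
        refine pow_le_pow_left' ?_ 2
        rw [← ofReal_norm_eq_coe_nnnorm]
        exact ENNReal.ofReal_le_ofReal ((norm_sub_proj_le (V n) (A x)).trans h2)
      · simp only [hbound, Set.indicator_of_notMem hxK, h3 hxK]
        simp
    have h_lim : ∀ᵐ x ∂μ, Tendsto
        (fun n => (‖m x‖₊:ℝ≥0∞)^2 * (‖A x - P n (A x)‖₊:ℝ≥0∞)^2) atTop (𝓝 0) := by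
      refine Filter.Eventually.of_forall fun x => ?_
      have t1 : Tendsto (fun n => A x - P n (A x)) atTop (𝓝 0) := by
        have := Tendsto.sub
          (tendsto_const_nhds : Tendsto (fun _ : ℕ => A x) atTop (𝓝 (A x))) (htend (A x))
        simpa [hPapp] using this
      have t2 : Tendsto (fun n => (‖A x - P n (A x)‖₊ : ℝ≥0∞)) atTop (𝓝 0) := by
        have := ENNReal.tendsto_ofReal ((continuous_norm.tendsto (0:H)).comp t1)
        exact (by simpa using this : Tendsto (fun n => ‖A x - P n (A x)‖ₑ) atTop (𝓝 0))
      have t3 : Tendsto (fun n => (‖A x - P n (A x)‖₊ : ℝ≥0∞)^2) atTop (𝓝 0) := by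
        have := ((ENNReal.continuous_pow 2).tendsto (0 : ℝ≥0∞)).comp t2
        simpa [Function.comp_def] using this
      have t4 := ENNReal.Tendsto.const_mul t3 (Or.inr (by
        exact ENNReal.pow_ne_top ENNReal.coe_ne_top : ((‖m x‖₊:ℝ≥0∞)^2) ≠ ⊤))
      simpa using t4
    constructor
    · have hconv := tendsto_lintegral_of_dominated_convergence' bound hmeas h_bound hboundfin h_lim
      simpa using hconv
    · intro n
      exact ((lintegral_mono_ae (h_bound n)).trans_lt hboundfin.lt_top).ne
  -- integrability of the representing integrand
  have hGnn : ∀ (g : H) (x : X), (‖pinner (G x) g‖₊ : ℝ≥0∞) = (‖pinner g (G x)‖₊ : ℝ≥0∞) :=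
    fun g x => by rw [nnnorm_pinner_symm]
  have hGfin : ∀ g : H, ∫⁻ x, (‖pinner (G x) g‖₊ : ℝ≥0∞)^2 ∂μ ≤ BG * (‖g‖₊ : ℝ≥0∞)^2 := by
    intro g
    simp_rw [hGnn g]
    exact hGb g
  have hmF : ∀ h : H, ∫⁻ x, (‖m x * pinner h (F x)‖₊:ℝ≥0∞)^2 ∂μ
      ≤ mB^2 * BF * (‖h‖₊:ℝ≥0∞)^2 := by
    intro h
    have h1 : ∫⁻ x, (‖m x * pinner h (F x)‖₊:ℝ≥0∞)^2 ∂μ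
        ≤ ∫⁻ x, mB^2 * (‖pinner h (F x)‖₊:ℝ≥0∞)^2 ∂μ := by
      refine lintegral_mono_ae ?_
      filter_upwards [hmae] with x hx
      rw [nnnorm_mul, ENNReal.coe_mul, mul_pow]
      exact mul_le_mul_left (pow_le_pow_left' hx 2) _
    rw [lintegral_const_mul' _ _ (ENNReal.pow_ne_top hmB)] at h1
    calc ∫⁻ x, (‖m x * pinner h (F x)‖₊:ℝ≥0∞)^2 ∂μ ≤ mB^2 * frameInt μ F h := h1
    _ ≤ mB^2 * (BF * (‖h‖₊:ℝ≥0∞)^2) := mul_le_mul_right (hFb h) _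
    _ = mB^2 * BF * (‖h‖₊:ℝ≥0∞)^2 := (mul_assoc _ _ _).symm
  have hmFfin : mB^2 * BF ≠ ⊤ := ENNReal.mul_ne_top (ENNReal.pow_ne_top hmB) BFlt.ne
  have hint : ∀ (h g : H), Integrable (fun x => m x * pinner h (F x) * pinner (G x) g) μ := by
    intro h g
    apply integrable_core (a := fun x => m x * pinner h (F x)) (b := fun x => pinner (G x) g)
      (hm_meas.mul (hFw h)) (aemeasurable_pinner_left hGw g)
    · exact ((hmF h).trans_lt (by
        exact ENNReal.mul_lt_top hmFfin.lt_top (by simp [ENNReal.pow_lt_top]))).ne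
    · exact ((hGfin g).trans_lt
        (ENNReal.mul_lt_top BGlt (by simp [ENNReal.pow_lt_top]))).ne
  -- the two symmetric cases
  rcases hbdd with ⟨C, hC, hFbd⟩ | ⟨C, hC, hGbd⟩
  · -- `F` is bounded : approximate `M` by `M ∘ P n`
    obtain ⟨heps, hepsfin⟩ := hepskey F hFw C hFbd
    set ε : ℕ → ℝ≥0∞ :=
      fun n => ∫⁻ x, (‖m x‖₊:ℝ≥0∞)^2 * (‖F x - P n (F x)‖₊:ℝ≥0∞)^2 ∂μ with hε
    have hnorm : ∀ n, ‖M - M.comp (P n)‖ ≤ Real.sqrt (ε n).toReal * Real.sqrt BG.toReal := by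
      intro n
      refine opNorm_le_of_rep (μ := μ) _
        (fun f x => m x * (pinner f (F x) - pinner (P n f) (F x)))
        (fun g x => pinner (G x) g) ?_ ?_ ?_ (hepsfin n) BGlt.ne ?_ ?_
      · intro f g
        have e1 : (M - M.comp (P n)) f = M f - M (P n f) := rfl
        have e2 : pinner (M f - M (P n f)) g = pinner (M f) g - pinner (M (P n f)) g := by
          simp [pinner, inner_sub_right]
        rw [e1, e2, hM f g, hM (P n f) g, ← integral_sub (hint f g) (hint (P n f) g)]
        congr 1; funext x; ring
      · intro f; exact hm_meas.mul ((hFw f).sub (hFw (P n f)))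
      · intro g; exact aemeasurable_pinner_left hGw g
      · intro f
        have hpt : ∀ x, (‖m x * (pinner f (F x) - pinner (P n f) (F x))‖₊ : ℝ≥0∞)^2
            ≤ (‖m x‖₊:ℝ≥0∞)^2 * (‖F x - P n (F x)‖₊:ℝ≥0∞)^2 * (‖f‖₊:ℝ≥0∞)^2 := by
          intro x
          have e : pinner f (F x) - pinner (P n f) (F x) = ⟪F x - P n (F x), f⟫ := by
            simp only [pinner, inner_sub_left]
            rw [← hPsa n (F x) f]
          have hδ : (‖pinner f (F x) - pinner (P n f) (F x)‖₊ : ℝ≥0∞)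
              ≤ (‖F x - P n (F x)‖₊:ℝ≥0∞) * (‖f‖₊:ℝ≥0∞) := by
            rw [← ofReal_norm_eq_coe_nnnorm, ← ofReal_norm_eq_coe_nnnorm,
              ← ofReal_norm_eq_coe_nnnorm, ← ENNReal.ofReal_mul (norm_nonneg _)]
            refine ENNReal.ofReal_le_ofReal ?_
            rw [e]
            exact norm_inner_le_norm _ _
          calc (‖m x * (pinner f (F x) - pinner (P n f) (F x))‖₊ : ℝ≥0∞)^2
              = (‖m x‖₊:ℝ≥0∞)^2
                * (‖pinner f (F x) - pinner (P n f) (F x)‖₊:ℝ≥0∞)^2 := by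
                rw [nnnorm_mul, ENNReal.coe_mul, mul_pow]
          _ ≤ (‖m x‖₊:ℝ≥0∞)^2 * ((‖F x - P n (F x)‖₊:ℝ≥0∞) * (‖f‖₊:ℝ≥0∞))^2 :=
                mul_le_mul_right (pow_le_pow_left' hδ 2) _
          _ = (‖m x‖₊:ℝ≥0∞)^2 * (‖F x - P n (F x)‖₊:ℝ≥0∞)^2 * (‖f‖₊:ℝ≥0∞)^2 := by
                rw [mul_pow, mul_assoc]
        calc ∫⁻ x, (‖m x * (pinner f (F x) - pinner (P n f) (F x))‖₊ : ℝ≥0∞)^2 ∂μ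
            ≤ ∫⁻ x, (‖m x‖₊:ℝ≥0∞)^2 * (‖F x - P n (F x)‖₊:ℝ≥0∞)^2 * (‖f‖₊:ℝ≥0∞)^2 ∂μ :=
              lintegral_mono hpt
        _ = ε n * (‖f‖₊:ℝ≥0∞)^2 :=
              lintegral_mul_const' _ _ (ENNReal.pow_ne_top ENNReal.coe_ne_top)
      · intro g; exact hGfin g
    have htendM : Tendsto (fun n => M.comp (P n)) atTop (𝓝 M) := by
      rw [tendsto_iff_norm_sub_tendsto_zero]
      have h1 : Tendsto (fun n => (ε n).toReal) atTop (𝓝 0) := by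
        have := (ENNReal.tendsto_toReal (by simp)).comp heps
        simpa [Function.comp_def] using this
      have h2 : Tendsto (fun n => Real.sqrt (ε n).toReal) atTop (𝓝 0) := by
        have := (Real.continuous_sqrt.tendsto 0).comp h1
        simpa [Function.comp_def] using this
      have hsq : Tendsto (fun n => Real.sqrt (ε n).toReal * Real.sqrt BG.toReal)
          atTop (𝓝 0) := by
        simpa using h2.mul_const (Real.sqrt BG.toReal)
      refine squeeze_zero (fun n => norm_nonneg _) (fun n => ?_) hsq
      rw [norm_sub_rev]; exact hnorm n
    have hcptn : ∀ n, IsCompactOperator ⇑(M.comp (P n)) := by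
      intro n
      haveI : Module.Finite ℂ ((V n).map (M : H →ₗ[ℂ] H)) :=
        Module.Finite.map (V n) (M : H →ₗ[ℂ] H)
      exact isCompactOperator_of_mem_fd _ ((V n).map (M : H →ₗ[ℂ] H))
        (fun f => ⟨P n f, SetLike.coe_mem _, rfl⟩)
    exact isClosed_setOf_isCompactOperator.mem_of_tendsto htendM
      (Filter.Eventually.of_forall hcptn)
  · -- `G` is bounded : approximate `M` by `P n ∘ M`
    obtain ⟨heps, hepsfin⟩ := hepskey G hGw C hGbd
    set ε : ℕ → ℝ≥0∞ :=
      fun n => ∫⁻ x, (‖m x‖₊:ℝ≥0∞)^2 * (‖G x - P n (G x)‖₊:ℝ≥0∞)^2 ∂μ with hε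
    have hnorm : ∀ n, ‖M - (P n).comp M‖ ≤ Real.sqrt BF.toReal
        * Real.sqrt (ε n).toReal := by
      intro n
      refine opNorm_le_of_rep (μ := μ) _
        (fun f x => pinner f (F x))
        (fun g x => m x * (pinner (G x) g - pinner (G x) (P n g)))
        ?_ ?_ ?_ BFlt.ne (hepsfin n) ?_ ?_
      · intro f g
        have e1 : (M - (P n).comp M) f = M f - P n (M f) := rfl
        have e2 : pinner (M f - P n (M f)) g = pinner (M f) g - pinner (P n (M f)) g := by
          simp [pinner, inner_sub_right]
        have e3 : pinner (P n (M f)) g = pinner (M f) (P n g) := by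
          simp only [pinner]
          exact (hPsa n g (M f)).symm
        rw [e1, e2, e3, hM f g, hM f (P n g), ← integral_sub (hint f g) (hint f (P n g))]
        congr 1; funext x; ring
      · intro f; exact hFw f
      · intro g
        exact hm_meas.mul
          ((aemeasurable_pinner_left hGw g).sub (aemeasurable_pinner_left hGw (P n g)))
      · intro f; exact hFb f
      · intro g
        have hpt : ∀ x, (‖m x * (pinner (G x) g - pinner (G x) (P n g))‖₊ : ℝ≥0∞)^2
            ≤ (‖m x‖₊:ℝ≥0∞)^2 * (‖G x - P n (G x)‖₊:ℝ≥0∞)^2 * (‖g‖₊:ℝ≥0∞)^2 := by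
          intro x
          have e : pinner (G x) g - pinner (G x) (P n g) = ⟪g - P n g, G x⟫ := by
            simp only [pinner, inner_sub_left]
          have e' : (⟪g - P n g, G x⟫ : ℂ) = ⟪g, G x - P n (G x)⟫ := by
            rw [inner_sub_left, inner_sub_right, hPsa n g (G x)]
          have hδ : (‖pinner (G x) g - pinner (G x) (P n g)‖₊ : ℝ≥0∞)
              ≤ (‖G x - P n (G x)‖₊:ℝ≥0∞) * (‖g‖₊:ℝ≥0∞) := by
            rw [← ofReal_norm_eq_coe_nnnorm, ← ofReal_norm_eq_coe_nnnorm,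
              ← ofReal_norm_eq_coe_nnnorm, ← ENNReal.ofReal_mul (norm_nonneg _)]
            refine ENNReal.ofReal_le_ofReal ?_
            rw [e, e']
            calc ‖(⟪g, G x - P n (G x)⟫ : ℂ)‖ ≤ ‖g‖ * ‖G x - P n (G x)‖ :=
                  norm_inner_le_norm _ _
            _ = ‖G x - P n (G x)‖ * ‖g‖ := mul_comm _ _
          calc (‖m x * (pinner (G x) g - pinner (G x) (P n g))‖₊ : ℝ≥0∞)^2
              = (‖m x‖₊:ℝ≥0∞)^2
                * (‖pinner (G x) g - pinner (G x) (P n g)‖₊:ℝ≥0∞)^2 := by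
                rw [nnnorm_mul, ENNReal.coe_mul, mul_pow]
          _ ≤ (‖m x‖₊:ℝ≥0∞)^2 * ((‖G x - P n (G x)‖₊:ℝ≥0∞) * (‖g‖₊:ℝ≥0∞))^2 :=
                mul_le_mul_right (pow_le_pow_left' hδ 2) _
          _ = (‖m x‖₊:ℝ≥0∞)^2 * (‖G x - P n (G x)‖₊:ℝ≥0∞)^2 * (‖g‖₊:ℝ≥0∞)^2 := by
                rw [mul_pow, mul_assoc]
        calc ∫⁻ x, (‖m x * (pinner (G x) g - pinner (G x) (P n g))‖₊ : ℝ≥0∞)^2 ∂μ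
            ≤ ∫⁻ x, (‖m x‖₊:ℝ≥0∞)^2 * (‖G x - P n (G x)‖₊:ℝ≥0∞)^2 * (‖g‖₊:ℝ≥0∞)^2 ∂μ :=
              lintegral_mono hpt
        _ = ε n * (‖g‖₊:ℝ≥0∞)^2 :=
              lintegral_mul_const' _ _ (ENNReal.pow_ne_top ENNReal.coe_ne_top)
    have htendM : Tendsto (fun n => (P n).comp M) atTop (𝓝 M) := by
      rw [tendsto_iff_norm_sub_tendsto_zero]
      have h1 : Tendsto (fun n => (ε n).toReal) atTop (𝓝 0) := by
        have := (ENNReal.tendsto_toReal (by simp)).comp heps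
        simpa [Function.comp_def] using this
      have h2 : Tendsto (fun n => Real.sqrt (ε n).toReal) atTop (𝓝 0) := by
        have := (Real.continuous_sqrt.tendsto 0).comp h1
        simpa [Function.comp_def] using this
      have hsq : Tendsto (fun n => Real.sqrt BF.toReal * Real.sqrt (ε n).toReal)
          atTop (𝓝 0) := by
        simpa using h2.const_mul (Real.sqrt BF.toReal)
      refine squeeze_zero (fun n => norm_nonneg _) (fun n => ?_) hsq
      rw [norm_sub_rev]; exact hnorm n
    have hcptn : ∀ n, IsCompactOperator ⇑((P n).comp M) := by
      intro n
      exact isCompactOperator_of_mem_fd _ (V n)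
        (fun f => by rw [ContinuousLinearMap.comp_apply, hPapp]; exact SetLike.coe_mem _)
    exact isClosed_setOf_isCompactOperator.mem_of_tendsto htendM
      (Filter.Eventually.of_forall hcptn)

end Main

/-- If `F, G` are Bessel mappings for `H = H₁ ⊗ H₂` w.r.t. the product
measure, at least one of which is norm bounded, and `m` is an essentially bounded
measurable symbol whose support has finite measure, then the continuous Bessel
multiplier `M_{m,F,G}` is a compact operator on `H`. -/
theorem multiplier_compact
    {X₁ X₂ : Type*} [MeasurableSpace X₁] [MeasurableSpace X₂]
    {H₁ H₂ H : Type*}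
    [NormedAddCommGroup H₁] [InnerProductSpace ℂ H₁] [CompleteSpace H₁]
      [TopologicalSpace.SeparableSpace H₁]
    [NormedAddCommGroup H₂] [InnerProductSpace ℂ H₂] [CompleteSpace H₂]
      [TopologicalSpace.SeparableSpace H₂]
    [NormedAddCommGroup H] [InnerProductSpace ℂ H] [CompleteSpace H]
      [TopologicalSpace.SeparableSpace H]
    (μ₁ : Measure X₁) (μ₂ : Measure X₂) [SigmaFinite μ₁] [SigmaFinite μ₂]
    (tp : HilbertTensorProduct H₁ H₂ H)
    (F G : X₁ × X₂ → H) (BF BG : ℝ≥0∞)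
    (hF : IsBesselMapping (μ₁.prod μ₂) F BF)
    (hG : IsBesselMapping (μ₁.prod μ₂) G BG)
    (hbdd : (∃ C > (0:ℝ), ∀ᵐ x ∂(μ₁.prod μ₂), ‖F x‖ ≤ C) ∨
            (∃ C > (0:ℝ), ∀ᵐ x ∂(μ₁.prod μ₂), ‖G x‖ ≤ C))
    (m : X₁ × X₂ → ℂ) (hm : MemLp m ⊤ (μ₁.prod μ₂))
    (hsupp : ∃ K : Set (X₁ × X₂), MeasurableSet K ∧ (μ₁.prod μ₂) K < ⊤ ∧
      ∀ᵐ x ∂(μ₁.prod μ₂), x ∉ K → m x = 0)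
    (M : H →L[ℂ] H) (hM : IsMultiplier (μ₁.prod μ₂) m F G M) :
    IsCompactOperator ⇑M :=
  multiplier_compact_main (μ₁.prod μ₂) F G BF BG hF hG hbdd m hm hsupp M hM

end ContFrame
end
end

section
/- Let H₁, H₂ be separable complex Hilbert spaces and (X, μ) = (X₁ × X₂, μ₁ ⊗ μ₂) the product of measure spaces with σ-finite positive measures. Let m_j be measurable functions on X_j and F_j, G_j Bessel mappings for H_j with respect to (X_j, μ_j), j = 1, 2, and set m = m₁ ⊗ m₂ (m(x₁,x₂) = m₁(x₁)m₂(x₂)), F = F₁ ⊗ F₂, G = G₁ ⊗ G₂. Assume M_{m,F,G} ∈ S₁(H₁ ⊗ H₂) and M_{m_j,F_j,G_j} ∈ S₁(H_j) for j = 1, 2. Then M_{m,F,G} = M_{m₁,F₁,G₁} ⊗ M_{m₂,F₂,G₂}, and the partial trace of M_{m,F,G} with respect to H₁ is the continuous Bessel multiplier T(M_{m₁,F₁,G₁} ⊗ M_{m₂,F₂,G₂}) = M_{m₁,F₁,G₁} · Tr_{H₂}(M_{m₂,F₂,G₂}); the analogous statement holds for the partial trace with respect to H₂. -/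
open MeasureTheory ENNReal

noncomputable section

namespace ContFrame

variable {X : Type*} {H : Type*}

/-- `∑_k |⟨f_k, T e_k⟩|^p` over finite orthonormal systems `(e_k)`, `(f_k)`;
the supremum of these quantities equals `‖T‖_{S_p}^p`. -/
def schattenSum {H : Type*} [NormedAddCommGroup H] [InnerProductSpace ℂ H]
    (p : ℝ) (T : H →L[ℂ] H) : ℝ≥0∞ :=
  ⨆ (n : ℕ) (e : Fin n → H) (f : Fin n → H)
    (_ : Orthonormal ℂ e) (_ : Orthonormal ℂ f),
      ENNReal.ofReal (∑ k, ‖pinner (f k) (T (e k))‖ ^ p)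

/-- The Schatten `p`-norm `‖T‖_{S_p}` (the `ℓ^p`-norm of the singular values). -/
def schattenNorm {H : Type*} [NormedAddCommGroup H] [InnerProductSpace ℂ H]
    (p : ℝ) (T : H →L[ℂ] H) : ℝ≥0∞ :=
  schattenSum p T ^ (1 / p)

/-- `T` belongs to the Schatten `p`-class `S_p(H)`: it is a compact operator whose
singular values lie in `ℓ^p`. -/
def MemSchatten {H : Type*} [NormedAddCommGroup H] [InnerProductSpace ℂ H]
    (p : ℝ) (T : H →L[ℂ] H) : Prop :=
  IsCompactOperator ⇑T ∧ schattenNorm p T < ⊤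

/-- `T` has trace `t`: `∑_i ⟨T b_i, b_i⟩ = t` for every orthonormal basis `(b_i)`. -/
def HasTrace {H : Type*} [NormedAddCommGroup H] [InnerProductSpace ℂ H]
    (T : H →L[ℂ] H) (t : ℂ) : Prop :=
  ∀ (ι : Type) (b : HilbertBasis ι ℂ H), HasSum (fun i => pinner (T (b i)) (b i)) t

/-- For tensor product symbols `m = m₁ ⊗ m₂` and Bessel mappings
`F = F₁ ⊗ F₂`, `G = G₁ ⊗ G₂`, if `M_{m,F,G}` and `M_{m_j,F_j,G_j}` are trace class,
then `M_{m,F,G} = M_{m₁,F₁,G₁} ⊗ M_{m₂,F₂,G₂}` and the partial trace of `M_{m,F,G}`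
w.r.t. `H₁` is `M_{m₁,F₁,G₁} · Tr_{H₂}(M_{m₂,F₂,G₂})`; analogously for `H₂`. -/
theorem multiplier_partialTrace
    {X₁ X₂ : Type*} [MeasurableSpace X₁] [MeasurableSpace X₂]
    {H₁ H₂ H : Type*}
    [NormedAddCommGroup H₁] [InnerProductSpace ℂ H₁] [CompleteSpace H₁]
      [TopologicalSpace.SeparableSpace H₁]
    [NormedAddCommGroup H₂] [InnerProductSpace ℂ H₂] [CompleteSpace H₂]
      [TopologicalSpace.SeparableSpace H₂]
    [NormedAddCommGroup H] [InnerProductSpace ℂ H] [CompleteSpace H]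
      [TopologicalSpace.SeparableSpace H]
    (μ₁ : Measure X₁) (μ₂ : Measure X₂) [SigmaFinite μ₁] [SigmaFinite μ₂]
    (tp : HilbertTensorProduct H₁ H₂ H)
    (F₁ G₁ : X₁ → H₁) (F₂ G₂ : X₂ → H₂) (BF₁ BG₁ BF₂ BG₂ : ℝ≥0∞)
    (hF₁ : IsBesselMapping μ₁ F₁ BF₁) (hG₁ : IsBesselMapping μ₁ G₁ BG₁)
    (hF₂ : IsBesselMapping μ₂ F₂ BF₂) (hG₂ : IsBesselMapping μ₂ G₂ BG₂)
    (m₁ : X₁ → ℂ) (m₂ : X₂ → ℂ)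
    -- the multipliers on the factors and on the tensor product
    (M₁ : H₁ →L[ℂ] H₁) (hM₁ : IsMultiplier μ₁ m₁ F₁ G₁ M₁)
    (M₂ : H₂ →L[ℂ] H₂) (hM₂ : IsMultiplier μ₂ m₂ F₂ G₂ M₂)
    (M : H →L[ℂ] H)
    (hM : IsMultiplier (μ₁.prod μ₂) (fun x : X₁ × X₂ => m₁ x.1 * m₂ x.2)
      (fun x : X₁ × X₂ => tp.tmul (F₁ x.1) (F₂ x.2))
      (fun x : X₁ × X₂ => tp.tmul (G₁ x.1) (G₂ x.2)) M)
    -- the defining weak integrals converge absolutely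
    (hI₁ : ∀ f g : H₁, Integrable (fun x => m₁ x * pinner f (F₁ x) * pinner (G₁ x) g) μ₁)
    (hI₂ : ∀ f g : H₂, Integrable (fun x => m₂ x * pinner f (F₂ x) * pinner (G₂ x) g) μ₂)
    -- trace class assumptions
    (hS : MemSchatten 1 M) (hS₁ : MemSchatten 1 M₁) (hS₂ : MemSchatten 1 M₂)
    (t₁ t₂ : ℂ) (ht₁ : HasTrace M₁ t₁) (ht₂ : HasTrace M₂ t₂)
    -- the tensor product of operators, characterized on simple tensors
    (TProd : (H₁ →L[ℂ] H₁) → (H₂ →L[ℂ] H₂) → (H →L[ℂ] H))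
    (hTProd : ∀ (A₁ : H₁ →L[ℂ] H₁) (A₂ : H₂ →L[ℂ] H₂) (u : H₁) (v : H₂),
      TProd A₁ A₂ (tp.tmul u v) = tp.tmul (A₁ u) (A₂ v))
    -- the partial traces w.r.t. `H₁` and `H₂`
    (ptrL : (H →L[ℂ] H) → (H₁ →L[ℂ] H₁))
    (hptrL : ∀ (A₁ : H₁ →L[ℂ] H₁) (A₂ : H₂ →L[ℂ] H₂), MemSchatten 1 A₁ →
      MemSchatten 1 A₂ → ∀ t : ℂ, HasTrace A₂ t → ptrL (TProd A₁ A₂) = t • A₁)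
    (ptrR : (H →L[ℂ] H) → (H₂ →L[ℂ] H₂))
    (hptrR : ∀ (A₁ : H₁ →L[ℂ] H₁) (A₂ : H₂ →L[ℂ] H₂), MemSchatten 1 A₁ →
      MemSchatten 1 A₂ → ∀ t : ℂ, HasTrace A₁ t → ptrR (TProd A₁ A₂) = t • A₂) :
    M = TProd M₁ M₂ ∧ ptrL M = t₂ • M₁ ∧ ptrR M = t₁ • M₂ := by
  have key : M = TProd M₁ M₂ := by
    -- It suffices to prove equality on the dense span of simple tensors.
    apply ContinuousLinearMap.ext_on tp.dense_span
    rintro _ ⟨u₁, u₂, rfl⟩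
    -- Fix a simple tensor `f = u₁ ⊗ u₂`; show `M f = TProd M₁ M₂ f` by testing
    -- against the dense span of simple tensors.
    apply Dense.eq_of_inner_left (𝕜 := ℂ)
      (S := (Submodule.span ℂ {z : H | ∃ a b, z = tp.tmul a b} : Set H)) tp.dense_span
    intro v hv
    rw [SetLike.mem_coe] at hv
    -- reduce to simple tensors `v` by linearity of `inner` in the 2nd argument
    induction hv using Submodule.span_induction with
    | mem v hv =>
      obtain ⟨v₁, v₂, rfl⟩ := hv
      -- Now compute both sides on simple tensors.
      have hMf : pinner (M (tp.tmul u₁ u₂)) (tp.tmul v₁ v₂)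
          = (∫ x, m₁ x * pinner u₁ (F₁ x) * pinner (G₁ x) v₁ ∂μ₁)
            * (∫ x, m₂ x * pinner u₂ (F₂ x) * pinner (G₂ x) v₂ ∂μ₂) := by
        rw [hM (tp.tmul u₁ u₂) (tp.tmul v₁ v₂)]
        rw [← MeasureTheory.integral_prod_mul
          (f := fun x => m₁ x * pinner u₁ (F₁ x) * pinner (G₁ x) v₁)
          (g := fun x => m₂ x * pinner u₂ (F₂ x) * pinner (G₂ x) v₂)]
        congr 1
        funext x
        simp only [pinner, tp.inner_tmul]
        ring
      have hTf : pinner (TProd M₁ M₂ (tp.tmul u₁ u₂)) (tp.tmul v₁ v₂)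
          = pinner (M₁ u₁) v₁ * pinner (M₂ u₂) v₂ := by
        rw [hTProd]
        simp only [pinner, tp.inner_tmul]
      have h1 : pinner (M (tp.tmul u₁ u₂)) (tp.tmul v₁ v₂)
          = pinner (TProd M₁ M₂ (tp.tmul u₁ u₂)) (tp.tmul v₁ v₂) := by
        rw [hMf, hTf, ← hM₁, ← hM₂]
      -- translate `pinner` equality into `inner` equality
      simpa [pinner] using congrArg (starRingEnd ℂ) h1
    | zero => simp
    | add a b _ _ ha hb => rw [inner_add_right, inner_add_right, ha, hb]
    | smul c a _ ha => rw [inner_smul_right, inner_smul_right, ha]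
  refine ⟨key, ?_, ?_⟩
  · rw [key]; exact hptrL M₁ M₂ hS₁ hS₂ t₂ ht₂
  · rw [key]; exact hptrR M₁ M₂ hS₁ hS₂ t₁ ht₁

end ContFrame
end
end
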